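/- Consider n agents and g goods, with prices p ∈ EuclideanSpace ℝ (Fin g) satisfying p k ≥ 0 for all k. For each i ∈ Fin n let Y_i ⊆ EuclideanSpace ℝ (Fin g) be a set of feasible production points, let y_i ∈ Y_i satisfy ⟪p, y⟫ ≤ ⟪p, y_i⟫ for all y ∈ Y_i (profit maximization), let f_i : EuclideanSpace ℝ (Fin g) → ℝ be a utility function that is locally non-satiated on the nonnegative orthant (for every x with x ≥ 0 componentwise and every ε > 0 there is x' ≥ 0 with ‖x' − x‖ < ε and f_i x' > f_i x), and let x_i ≥ 0 satisfy ⟪p, x_i⟫ ≤ ⟪p, y_i⟫ and f_i y ≤ f_i x_i for every y ≥ 0 with ⟪p, y⟫ ≤ ⟪p, y_i⟫ (utility maximization in the budget set determined by earnings ⟪p, y_i⟫). Then there do not exist x'_i ≥ 0 and y'_i ∈ Y_i (i ∈ Fin n) with ∑_i x'_i ≤ ∑_i y'_i componentwise, f_i (x'_i) ≥ f_i (x_i) for all i, and f_{i₀} (x'_{i₀}) > f_{i₀} (x_{i₀}) for some i₀. -/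

import Mathlib

/-- Paper's First Welfare Theorem (Theorem 6.1): equilibrium utilities are
(partially) Pareto optimal — no alternative feasible production and allocation
of the conventional goods makes every agent at least as well off and some agent
strictly better off. -/
theorem stmt12 (n g : ℕ) (p : EuclideanSpace ℝ (Fin g)) (hp : ∀ k, 0 ≤ p k)
    (Y : Fin n → Set (EuclideanSpace ℝ (Fin g)))
    (y : Fin n → EuclideanSpace ℝ (Fin g)) (hyY : ∀ i, y i ∈ Y i)
    (hprofit : ∀ i, ∀ y' ∈ Y i, (inner ℝ p y' : ℝ) ≤ (inner ℝ p (y i) : ℝ))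
    (f : Fin n → EuclideanSpace ℝ (Fin g) → ℝ)
    (hlns : ∀ (i : Fin n) (x : EuclideanSpace ℝ (Fin g)), (∀ k, 0 ≤ x k) →
      ∀ ε : ℝ, 0 < ε →
        ∃ x' : EuclideanSpace ℝ (Fin g),
          (∀ k, 0 ≤ x' k) ∧ ‖x' - x‖ < ε ∧ f i x < f i x')
    (x : Fin n → EuclideanSpace ℝ (Fin g))
    (hx0 : ∀ i k, 0 ≤ x i k)
    (hbudget : ∀ i, (inner ℝ p (x i) : ℝ) ≤ (inner ℝ p (y i) : ℝ))
    (hopt : ∀ i, ∀ z : EuclideanSpace ℝ (Fin g), (∀ k, 0 ≤ z k) →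
      (inner ℝ p z : ℝ) ≤ (inner ℝ p (y i) : ℝ) → f i z ≤ f i (x i)) :
    ¬ ∃ (x' y' : Fin n → EuclideanSpace ℝ (Fin g)),
        (∀ i k, 0 ≤ x' i k) ∧ (∀ i, y' i ∈ Y i) ∧
        (∀ k, ∑ i, x' i k ≤ ∑ i, y' i k) ∧
        (∀ i, f i (x i) ≤ f i (x' i)) ∧
        (∃ i₀, f i₀ (x i₀) < f i₀ (x' i₀)) := by
  rintro ⟨x', y', hx'0, hy'Y, hfeas, hge, i₀, hstrict⟩
  -- Step 1: any bundle at least as good costs at least the earnings.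
  have key : ∀ i, (inner ℝ p (y i) : ℝ) ≤ (inner ℝ p (x' i) : ℝ) := by
    intro i
    by_contra h
    push_neg at h
    set δ : ℝ := ((inner ℝ p (y i) : ℝ) - (inner ℝ p (x' i) : ℝ)) / (‖p‖ + 1) with hδ
    have hδpos : 0 < δ := by
      apply div_pos (by linarith) (by positivity)
    obtain ⟨z, hz0, hznear, hzgt⟩ := hlns i (x' i) (hx'0 i) δ hδpos
    have hzb : (inner ℝ p z : ℝ) ≤ (inner ℝ p (y i) : ℝ) := by
      have h1 : (inner ℝ p (z - x' i) : ℝ) ≤ ‖p‖ * ‖z - x' i‖ := real_inner_le_norm p _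
      have h2 : (inner ℝ p (z - x' i) : ℝ) = (inner ℝ p z : ℝ) - (inner ℝ p (x' i) : ℝ) :=
        inner_sub_right p z (x' i)
      have h3 : ‖p‖ * ‖z - x' i‖ ≤ ‖p‖ * δ :=
        mul_le_mul_of_nonneg_left (le_of_lt hznear) (norm_nonneg p)
      have h4 : ‖p‖ * δ < (‖p‖ + 1) * δ := by nlinarith
      have h5 : (‖p‖ + 1) * δ = (inner ℝ p (y i) : ℝ) - (inner ℝ p (x' i) : ℝ) := by
        rw [hδ]; field_simp
      linarith
    have := hopt i z hz0 hzb
    have := hge i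
    linarith
  -- Step 2: the strictly better bundle costs strictly more.
  have keystrict : (inner ℝ p (y i₀) : ℝ) < (inner ℝ p (x' i₀) : ℝ) := by
    by_contra h
    push_neg at h
    have := hopt i₀ (x' i₀) (hx'0 i₀) h
    linarith
  -- Step 3: sum up.
  have hsum1 : ∑ i, (inner ℝ p (y i) : ℝ) < ∑ i, (inner ℝ p (x' i) : ℝ) :=
    Finset.sum_lt_sum (fun i _ => key i) ⟨i₀, Finset.mem_univ _, keystrict⟩
  have hsum2 : ∑ i, (inner ℝ p (y' i) : ℝ) ≤ ∑ i, (inner ℝ p (y i) : ℝ) :=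
    Finset.sum_le_sum (fun i _ => hprofit i (y' i) (hy'Y i))
  have hsum3 : ∑ i, (inner ℝ p (x' i) : ℝ) ≤ ∑ i, (inner ℝ p (y' i) : ℝ) := by
    simp only [PiLp.inner_apply, RCLike.inner_apply, conj_trivial]
    rw [Finset.sum_comm, Finset.sum_comm (γ := Fin n)]
    apply Finset.sum_le_sum
    intro k _
    rw [← Finset.sum_mul, ← Finset.sum_mul]
    exact mul_le_mul_of_nonneg_right (hfeas k) (hp k)
  linarith
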